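/- Miclet–Bayoudh–Delhay set proportions are subsumed: for a finite universe U and sets A, B, C, D ⊆ U, if there exist sets E, F with B = (A − E) ∪ F and D = (C − E) ∪ F, then the analogical proportion A : B :: C : D holds in the powerset algebra (P(U), ∩, ∪, ᶜ) with every subset of U as a distinguished constant. -/

import Mathlib

/- Analogical proportions (Antić): single-variable terms over a language of algebras. -/

/-- A term over a language with function symbols `F` of arities `ar`, in the single variable `z`.
Constant symbols are function symbols of arity 0. -/
inductive Term (F : Type*) (ar : F → ℕ) : Type _ where
  | var : Term F ar
  | app : (f : F) → (Fin (ar f) → Term F ar) → Term F ar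

/-- An algebra for the language `(F, ar)` with universe `A`. -/
structure Alg (F : Type*) (ar : F → ℕ) (A : Type*) where
  interp : (f : F) → (Fin (ar f) → A) → A

variable {F : Type*} {ar : F → ℕ} {A B : Type*}

/-- Evaluation of a term at `z := x`. -/
def Term.eval (𝔸 : Alg F ar A) (x : A) : Term F ar → A
  | .var => x
  | .app f ts => 𝔸.interp f fun i => (ts i).eval 𝔸 x

/-- The set of justifications `s → t` of a pair `(a, b)` in the algebra `𝔸`:
pairs of terms such that `a = s(e)` and `b = t(e)` for some witness `e`. -/
def Jus (𝔸 : Alg F ar A) (a b : A) : Set (Term F ar × Term F ar) :=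
  {p | ∃ e : A, p.1.eval 𝔸 e = a ∧ p.2.eval 𝔸 e = b}

/-- Justifications of `a : b :: c : d` in `(𝔸, 𝔹)`. -/
def JusP (𝔸 : Alg F ar A) (𝔹 : Alg F ar B) (a b : A) (c d : B) :
    Set (Term F ar × Term F ar) :=
  Jus 𝔸 a b ∩ Jus 𝔹 c d

/-- `(𝔸, 𝔹) ⊨ a : b :: c : d`: the set of justifications is subset-maximal w.r.t. `d`. -/
def Proportion (𝔸 : Alg F ar A) (𝔹 : Alg F ar B) (a b : A) (c d : B) : Prop :=
  ∀ d' : B, JusP 𝔸 𝔹 a b c d ⊆ JusP 𝔸 𝔹 a b c d' →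
    JusP 𝔸 𝔹 a b c d' ⊆ JusP 𝔸 𝔹 a b c d

/-- `j` is a characteristic justification of `a : b :: c : d` in `(𝔸, 𝔹)`. -/
def CharJus (𝔸 : Alg F ar A) (𝔹 : Alg F ar B) (a b : A) (c d : B)
    (j : Term F ar × Term F ar) : Prop :=
  j ∈ JusP 𝔸 𝔹 a b c d ↔ Proportion 𝔸 𝔹 a b c d

/-- The language of sets `{∩, ∪, ᶜ}` with a constant symbol for every subset of `U`. -/
inductive PSym (U : Type*) : Type _ where
  | inter | union | compl
  | const : Set U → PSym U

def pAr {U : Type*} : PSym U → ℕ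
  | .inter => 2 | .union => 2 | .compl => 1 | .const _ => 0

/-- The powerset boolean algebra of `U` with every subset as distinguished constant. -/
def PAlg (U : Type*) : Alg (PSym U) pAr (Set U) :=
  ⟨fun f => match f with
    | .inter => fun v => v ⟨0, Nat.zero_lt_two⟩ ∩ v ⟨1, Nat.one_lt_two⟩
    | .union => fun v => v ⟨0, Nat.zero_lt_two⟩ ∪ v ⟨1, Nat.one_lt_two⟩
    | .compl => fun v => (v ⟨0, Nat.zero_lt_one⟩)ᶜ
    | .const K => fun _ => K⟩

/-- Miclet–Bayoudh–Delhay set proportions are subsumed: over a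
finite universe `U`, if `B = (A − E) ∪ F` and `D = (C − E) ∪ F`, then
`A : B :: C : D` holds in the powerset algebra of `U` with all constants. -/
theorem MBD_subsumed {U : Type*} [Finite U] (A B C D E F : Set U)
    (hB : B = (A \ E) ∪ F) (hD : D = (C \ E) ∪ F) :
    Proportion (PAlg U) (PAlg U) A B C D := by
  intro d' hsub
  -- the term  (z ∩ Eᶜ) ∪ F
  set t : Term (PSym U) pAr :=
    .app .union ![ .app .inter ![ .var, .app .compl ![ .app (.const E) ![] ] ],
                   .app (.const F) ![] ] with ht
  have heval : ∀ x : Set U, t.eval (PAlg U) x = (x \ E) ∪ F := by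
    intro x
    simp [ht, Term.eval, PAlg, Set.diff_eq, Matrix.cons_val_zero, Matrix.cons_val_one,
      Matrix.head_cons]
    rfl
  have hj : ((Term.var, t) : Term (PSym U) pAr × Term (PSym U) pAr)
      ∈ JusP (PAlg U) (PAlg U) A B C D := by
    refine ⟨⟨A, rfl, ?_⟩, ⟨C, rfl, ?_⟩⟩
    · rw [heval]; exact hB.symm
    · rw [heval]; exact hD.symm
  have hj' := hsub hj
  obtain ⟨-, e, he, hte⟩ := hj'
  have : d' = D := by
    rw [← hte, heval]
    simp only [Term.eval] at he
    rw [he, ← hD]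
  rw [this]
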